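/- Let K be a field and let α be an element of an extension field that is transcendental over K. Then for any nonconstant rational function φ(T) ∈ K(T), the element α is algebraic over the subfield K(φ(α)), and the degree [K(α) : K(φ(α))] equals max(deg p, deg q) where φ = p/q in lowest terms. -/

import Mathlib

open IntermediateField Polynomial

/-- The swap homomorphism `K[X][Y] →+* K[X][Y]` exchanging the two variables. -/
noncomputable def polySwap (K : Type) [CommSemiring K] : K[X][X] →+* K[X][X] :=
  eval₂RingHom (mapRingHom (C : K →+* K[X])) (C X)

lemma polySwap_comp_polySwap (K : Type) [CommSemiring K] :
    (polySwap K).comp (polySwap K) = RingHom.id _ := by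
  apply Polynomial.ringHom_ext'
  · apply Polynomial.ringHom_ext'
    · ext a
      simp [polySwap]
    · simp [polySwap]
  · simp [polySwap]

noncomputable def polySwapEquiv (K : Type) [CommSemiring K] : K[X][X] ≃+* K[X][X] :=
  RingEquiv.ofRingHom (polySwap K) (polySwap K) (polySwap_comp_polySwap K)
    (polySwap_comp_polySwap K)

variable {K : Type} [Field K]

lemma biv_degree (p q : K[X]) (hq0 : q ≠ 0) :
    ((C p - X * C q : K[X][X]).map (algebraMap K[X] (RatFunc K))).degree = 1 := by
  have hq : algebraMap K[X] (RatFunc K) q ≠ 0 := by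
    simpa using (map_ne_zero_iff _ (IsFractionRing.injective K[X] (RatFunc K))).mpr hq0
  rw [Polynomial.map_sub, Polynomial.map_mul, map_C, map_C, Polynomial.map_X]
  have := Polynomial.degree_linear (a := -(algebraMap K[X] (RatFunc K) q))
    (b := algebraMap K[X] (RatFunc K) p) (by simpa using hq)
  rw [← this]
  congr 1
  rw [map_neg, mul_comm]
  ring

lemma biv_isPrimitive (p q : K[X]) (hcop : IsCoprime p q) :
    (C p - X * C q : K[X][X]).IsPrimitive := by
  intro r hr
  rw [Polynomial.C_dvd_iff_dvd_coeff] at hr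
  have h0 : r ∣ p := by simpa using hr 0
  have h1 : r ∣ -q := by simpa [coeff_X_mul] using hr 1
  exact hcop.isUnit_of_dvd' h0 ((dvd_neg).mp h1)

lemma biv_irreducible (p q : K[X]) (hq0 : q ≠ 0) (hcop : IsCoprime p q) :
    Irreducible (C p - X * C q : K[X][X]) := by
  letI := Classical.decEq K
  rw [(biv_isPrimitive p q hcop).irreducible_iff_irreducible_map_fraction_map (K := RatFunc K)]
  exact irreducible_of_degree_eq_one (biv_degree p q hq0)

lemma polySwap_apply (p q : K[X]) :
    polySwap K (C p - X * C q) = p.map C - C X * q.map C := by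
  simp only [polySwap, map_sub, map_mul, coe_eval₂RingHom, eval₂_C, eval₂_X, coe_mapRingHom]

lemma biv_natDegree (p q : K[X]) (hp0 : p ≠ 0) (hq0 : q ≠ 0)
    (hn : 1 ≤ max p.natDegree q.natDegree) :
    (p.map (C : K →+* K[X]) - C X * q.map (C : K →+* K[X])).natDegree
      = max p.natDegree q.natDegree := by
  have hCinj : Function.Injective (C : K →+* K[X]) := Polynomial.C_injective
  have hdp : (p.map (C : K →+* K[X])).natDegree = p.natDegree :=
    natDegree_map_eq_of_injective hCinj p
  have hdq : (C X * q.map (C : K →+* K[X])).natDegree = q.natDegree := by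
    rw [natDegree_C_mul (by exact X_ne_zero), natDegree_map_eq_of_injective hCinj]
  apply le_antisymm
  · exact (natDegree_sub_le _ _).trans (by rw [hdp, hdq])
  · set n := max p.natDegree q.natDegree with hn'
    apply le_natDegree_of_ne_zero
    rw [coeff_sub, coeff_map, coeff_C_mul, coeff_map]
    intro h
    rw [sub_eq_zero] at h
    have h0 := congrArg (fun r => Polynomial.coeff r 0) h
    have h1 := congrArg (fun r => Polynomial.coeff r 1) h
    simp [coeff_X_mul, coeff_C] at h0 h1
    rcases max_choice p.natDegree q.natDegree with hc | hc
    · exact (Polynomial.leadingCoeff_ne_zero.mpr hp0) (by rw [leadingCoeff, ← hc, ← hn']; exact h0)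
    · exact (Polynomial.leadingCoeff_ne_zero.mpr hq0)
        (by rw [leadingCoeff, ← hc, ← hn']; exact h1.symm)

theorem stmt12 (K L : Type) [Field K] [Field L] [Algebra K L]
    (α : L) (hα : Transcendental K α)
    (φ : RatFunc K) (hφ : 1 ≤ max φ.num.natDegree φ.denom.natDegree) :
    IsAlgebraic (K⟮aeval α φ.num / aeval α φ.denom⟯) α ∧
    Module.finrank (K⟮aeval α φ.num / aeval α φ.denom⟯)
        ((K⟮aeval α φ.num / aeval α φ.denom⟯)⟮α⟯) =
      max φ.num.natDegree φ.denom.natDegree := by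
  set p := φ.num with hp
  set q := φ.denom with hq
  have hq0 : q ≠ 0 := φ.denom_ne_zero
  have hφ0 : φ ≠ 0 := by
    rintro rfl
    simp [hp, hq] at hφ
  have hp0 : p ≠ 0 := RatFunc.num_ne_zero hφ0
  have hcop : IsCoprime p q := φ.isCoprime_num_denom
  have haev : ∀ r : K[X], r ≠ 0 → (aeval α) r ≠ 0 := fun r hr h => hα ⟨r, hr, h⟩
  set β : L := aeval α p / aeval α q with hβ
  have hβ0 : β ≠ 0 := div_ne_zero (haev p hp0) (haev q hq0)
  set F := K⟮β⟯ with hF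
  set γ : F := AdjoinSimple.gen K β with hγ
  have hγL : algebraMap F L γ = β := rfl
  have hγ0 : γ ≠ 0 := fun h => hβ0 (by rw [← hγL, h, map_zero])
  set ι : K →+* F := algebraMap K F with hι
  have hιinj : Function.Injective ι := ι.injective
  set f : F[X] := p.map ι - C γ * q.map ι with hf
  have hfaev : aeval α f = 0 := by
    rw [hf, map_sub, map_mul, aeval_C]
    have h1 : aeval α (p.map ι) = aeval α p := aeval_map_algebraMap _ _ _
    have h2 : aeval α (q.map ι) = aeval α q := aeval_map_algebraMap _ _ _
    rw [h1, h2, hγL, hβ, div_mul_cancel₀ _ (haev q hq0), sub_self]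
  have hfne : f ≠ 0 := by
    intro h
    rw [hf, sub_eq_zero] at h
    have hlead := congrArg leadingCoeff h
    rw [leadingCoeff_map_of_injective hιinj, leadingCoeff_mul, leadingCoeff_C,
      leadingCoeff_map_of_injective hιinj] at hlead
    have hql : q.leadingCoeff ≠ 0 := leadingCoeff_ne_zero.mpr hq0
    have hιql : ι q.leadingCoeff ≠ 0 := fun hz => hql (hιinj (by simpa using hz))
    have hγc : γ = ι (p.leadingCoeff / q.leadingCoeff) := by
      rw [map_div₀, hlead, mul_div_assoc, div_self hιql, mul_one]
    rw [hγc, ← map_C, ← Polynomial.map_mul] at h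
    have hpq : p = C (p.leadingCoeff / q.leadingCoeff) * q :=
      Polynomial.map_injective ι hιinj h
    have hqu : IsUnit q := hcop.isUnit_of_dvd' (Dvd.intro_left _ hpq.symm) dvd_rfl
    have hdq : q.natDegree = 0 := natDegree_eq_zero_of_isUnit hqu
    have hdp : p.natDegree = 0 := by
      have h2 := Polynomial.natDegree_C_mul_le (p.leadingCoeff / q.leadingCoeff) q
      rw [← hpq] at h2
      omega
    simp [hdp, hdq] at hφ
  have halg : IsAlgebraic F α := ⟨f, hfne, hfaev⟩
  refine ⟨halg, ?_⟩
  -- β is transcendental over K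
  have hβtrans : Transcendental K β := by
    intro hβalg
    have h1 : FiniteDimensional K F := IntermediateField.adjoin.finiteDimensional hβalg.isIntegral
    have h2 : Algebra.IsIntegral K F := Algebra.IsIntegral.of_finite K F
    exact hα (isIntegral_trans α halg.isIntegral).isAlgebraic
  have hinjβ : Function.Injective (Polynomial.aeval β : K[X] →ₐ[K] L) :=
    transcendental_iff_injective.mp hβtrans
  set ψ : RatFunc K →ₐ[K] L := RatFunc.liftAlgHom (Polynomial.aeval β)
    (nonZeroDivisors_le_comap_nonZeroDivisors_of_injective _ hinjβ) with hψ
  have hψ_alg : ∀ r : K[X], ψ (algebraMap K[X] (RatFunc K) r) = aeval β r := by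
    intro r
    have h := RatFunc.liftAlgHom_apply_div (φ := Polynomial.aeval β)
      (nonZeroDivisors_le_comap_nonZeroDivisors_of_injective _ hinjβ) r 1
    simpa using h
  have hrange : ψ.fieldRange = F := by
    apply le_antisymm
    · rintro x hx
      obtain ⟨y, rfl⟩ := hx
      show ψ y ∈ F
      rw [hψ, ← RatFunc.num_div_denom y, RatFunc.liftAlgHom_apply_div]
      have h1 : ∀ r : K[X], aeval β r ∈ F :=
        fun r => IntermediateField.algebra_adjoin_le_adjoin K {β}
          (Polynomial.aeval_mem_adjoin_singleton K β)
      exact div_mem (h1 _) (h1 _)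
    · rw [hF, IntermediateField.adjoin_le_iff, Set.singleton_subset_iff]
      refine ⟨algebraMap K[X] (RatFunc K) X, ?_⟩
      show ψ _ = β
      rw [hψ_alg, aeval_X]
  set e : RatFunc K ≃ₐ[K] F :=
    (AlgEquiv.ofInjectiveField ψ).trans (IntermediateField.equivOfEq hrange) with he
  have hecoe : ∀ x, (algebraMap F L) (e x) = ψ x := fun x => rfl
  set e' : RatFunc K ≃+* F := e.toRingEquiv with he'
  set ρ : K[X] →+* F := e'.toRingHom.comp (algebraMap K[X] (RatFunc K)) with hρ
  have hρinj : Function.Injective ρ := by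
    rw [hρ, RingHom.coe_comp]
    exact e'.injective.comp (IsFractionRing.injective K[X] (RatFunc K))
  have hρC : ∀ a : K, ρ (C a) = ι a := by
    intro a
    rw [hρ, RingHom.comp_apply]
    have h1 : algebraMap K[X] (RatFunc K) (C a) = algebraMap K (RatFunc K) a := by
      rw [IsScalarTower.algebraMap_apply K K[X] (RatFunc K), Polynomial.algebraMap_eq]
    rw [h1]
    exact e.commutes a
  have hρX : ρ X = γ := by
    apply (algebraMap F L).injective
    rw [hρ, RingHom.comp_apply]
    show (algebraMap F L) (e _) = _
    rw [hecoe, hψ_alg, aeval_X, hγL]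
  set F0 : K[X][X] := polySwapEquiv K (C p - X * C q) with hF0
  have hsw : F0 = p.map (C : K →+* K[X]) - C X * q.map (C : K →+* K[X]) := polySwap_apply p q
  have hF0deg : F0.natDegree = max p.natDegree q.natDegree := by
    rw [hsw]; exact biv_natDegree p q hp0 hq0 hφ
  have hfρ : f = Polynomial.map ρ F0 := by
    have hcomp : ρ.comp (Polynomial.C : K →+* K[X]) = ι := RingHom.ext hρC
    rw [hsw, Polynomial.map_sub, Polynomial.map_mul, Polynomial.map_map, Polynomial.map_map,
      hcomp, Polynomial.map_C, hρX, hf]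
  have hF0irr : Irreducible F0 :=
    (MulEquiv.irreducible_iff (polySwapEquiv K)).mpr (biv_irreducible p q hq0 hcop)
  have hF0prim : F0.IsPrimitive := by
    intro r hr
    rcases hr with ⟨v, hv⟩
    rcases hF0irr.isUnit_or_isUnit hv with h | h
    · exact isUnit_C.mp h
    · exfalso
      rcases Polynomial.isUnit_iff.mp h with ⟨u, hu, huC⟩
      have hd := hF0deg
      rw [hv, ← huC, ← C_mul, natDegree_C] at hd
      omega
  have hf0irr : Irreducible (F0.map (algebraMap K[X] (RatFunc K))) := by
    letI := Classical.decEq K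
    exact (hF0prim.irreducible_iff_irreducible_map_fraction_map).mp hF0irr
  have hfirr : Irreducible f := by
    rw [hfρ]
    have hmm : Polynomial.map ρ F0
        = (Polynomial.mapEquiv e') (F0.map (algebraMap K[X] (RatFunc K))) := by
      rw [Polynomial.mapEquiv_apply, Polynomial.map_map, hρ]
      rfl
    rw [hmm]
    exact (MulEquiv.irreducible_iff _).mpr hf0irr
  have hint : IsIntegral F α := halg.isIntegral
  have hmin := minpoly.eq_of_irreducible hfirr hfaev
  rw [IntermediateField.adjoin.finrank hint, ← hmin]
  have hlc : (C f.leadingCoeff⁻¹ : (↥F)[X]) ≠ 0 := by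
    simpa using inv_ne_zero (leadingCoeff_ne_zero.mpr hfne)
  rw [natDegree_mul hfne hlc, natDegree_C, add_zero, hfρ,
    natDegree_map_eq_of_injective hρinj, hF0deg]
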